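/- arXiv:2506.02793 — 2 statements merged into one kernel-verified Lean document; each statement's English description precedes it below -/
import Mathlib

section
/- Let H be a separable Hilbert space and let ξ₁, …, ξ_n be i.i.d. H-valued random variables with ‖ξ_i‖_H ≤ κ almost surely, for a finite constant κ > 0. Then for every δ ∈ (0,1), with probability at least 1 − δ, ‖(1/n) Σ_{i=1}^n ξ_i − E[ξ₁]‖_H ≤ 4 κ log(2/δ) / √n. In particular, the empirical kernel mean embedding μ̂ = (1/n) Σ φ(z_i) of i.i.d. samples z_i, built from a bounded feature map φ with sup ‖φ(z)‖ ≤ κ, satisfies ‖μ̂ − E[φ(Z)]‖_H ≤ 4κ log(2/δ)/√n with probability at least 1 − δ. -/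
open MeasureTheory ProbabilityTheory


open Real Set

-- sinh x ≤ x * cosh x for x ≥ 0
lemma sinh_le_self_mul_cosh {x : ℝ} (hx : 0 ≤ x) : Real.sinh x ≤ x * Real.cosh x := by
  have h : MonotoneOn (fun y : ℝ => y * Real.cosh y - Real.sinh y) (Set.Ici 0) := by
    apply monotoneOn_of_deriv_nonneg (convex_Ici 0)
    · fun_prop
    · intro y hy
      exact (((hasDerivAt_id y).mul (Real.hasDerivAt_cosh y)).sub
        (Real.hasDerivAt_sinh y)).differentiableAt.differentiableWithinAt
    · intro y hy
      rw [interior_Ici] at hy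
      have hd : HasDerivAt (fun y : ℝ => y * Real.cosh y - Real.sinh y)
          (1 * Real.cosh y + y * Real.sinh y - Real.cosh y) y :=
        ((hasDerivAt_id y).mul (Real.hasDerivAt_cosh y)).sub (Real.hasDerivAt_sinh y)
      rw [hd.deriv]
      have : 0 ≤ y * Real.sinh y := mul_nonneg hy.le (Real.sinh_nonneg_iff.2 hy.le)
      nlinarith
  have := h (Set.self_mem_Ici) (Set.mem_Ici.2 hx) hx
  simpa using this

lemma sinh_div_self_monotoneOn : MonotoneOn (fun x : ℝ => Real.sinh x / x) (Set.Ioi 0) := by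
  intro x hx y hy hxy
  simp only [Set.mem_Ioi] at hx hy
  rw [div_le_div_iff₀ hx hy]
  -- sinh x * y ≤ sinh y * x
  have h : MonotoneOn (fun z : ℝ => x * Real.sinh z - z * Real.sinh x) (Set.Ici x) := by
    apply monotoneOn_of_deriv_nonneg (convex_Ici x)
    · fun_prop
    · intro z hz
      exact (((hasDerivAt_const z x).mul (Real.hasDerivAt_sinh z)).sub
        ((hasDerivAt_id z).mul (hasDerivAt_const z (Real.sinh x)))).differentiableAt.differentiableWithinAt
    · intro z hz
      rw [interior_Ici] at hz
      have hd : HasDerivAt (fun z : ℝ => x * Real.sinh z - z * Real.sinh x)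
          ((0 * Real.sinh z + x * Real.cosh z) - (1 * Real.sinh x + z * 0)) z :=
        ((hasDerivAt_const z x).mul (Real.hasDerivAt_sinh z)).sub
          ((hasDerivAt_id z).mul (hasDerivAt_const z (Real.sinh x)))
      rw [hd.deriv]
      have h1 : Real.sinh x ≤ x * Real.cosh x := sinh_le_self_mul_cosh hx.le
      have h2 : Real.cosh x ≤ Real.cosh z := by
        rw [Real.cosh_le_cosh]
        rw [abs_of_nonneg hx.le, abs_of_nonneg (hx.trans hz).le]
        exact hz.le
      have h3 : x * Real.cosh x ≤ x * Real.cosh z := by nlinarith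
      nlinarith
  have := h (Set.self_mem_Ici) (Set.mem_Ici.2 hxy) hxy
  simp only at this
  nlinarith

lemma convexOn_cosh_sqrt {l : ℝ} (hl : 0 ≤ l) :
    ConvexOn ℝ (Set.Ici 0) (fun s : ℝ => Real.cosh (l * Real.sqrt s)) := by
  rcases eq_or_lt_of_le hl with rfl | hl
  · simpa using convexOn_const (1 : ℝ) (convex_Ici 0)
  · have hderiv : ∀ s : ℝ, 0 < s → HasDerivAt (fun s : ℝ => Real.cosh (l * Real.sqrt s))
        (Real.sinh (l * Real.sqrt s) * (l * (1 / (2 * Real.sqrt s)))) s := by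
      intro s hs
      have h1 : HasDerivAt (fun s : ℝ => l * Real.sqrt s) (l * (1 / (2 * Real.sqrt s))) s :=
        (Real.hasDerivAt_sqrt hs.ne').const_mul l
      exact (Real.hasDerivAt_cosh _).comp s h1
    apply MonotoneOn.convexOn_of_deriv (convex_Ici 0)
    · exact (Real.continuous_cosh.comp (continuous_const.mul Real.continuous_sqrt)).continuousOn
    · rw [interior_Ici]
      intro s hs
      exact (hderiv s hs).differentiableAt.differentiableWithinAt
    · rw [interior_Ici]
      intro s1 hs1 s2 hs2 hle
      rw [(hderiv s1 hs1).deriv, (hderiv s2 hs2).deriv]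
      have hu1 : 0 < l * Real.sqrt s1 := mul_pos hl (Real.sqrt_pos.2 hs1)
      have hu2 : 0 < l * Real.sqrt s2 := mul_pos hl (Real.sqrt_pos.2 hs2)
      have huu : l * Real.sqrt s1 ≤ l * Real.sqrt s2 :=
        mul_le_mul_of_nonneg_left (Real.sqrt_le_sqrt hle) hl.le
      have key := sinh_div_self_monotoneOn hu1 hu2 huu
      have e1 : ∀ s : ℝ, 0 < s → Real.sinh (l * Real.sqrt s) * (l * (1 / (2 * Real.sqrt s)))
          = (l ^ 2 / 2) * (Real.sinh (l * Real.sqrt s) / (l * Real.sqrt s)) := by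
        intro s hs
        have h : Real.sqrt s ≠ 0 := (Real.sqrt_pos.2 hs).ne'
        field_simp
      rw [e1 s1 hs1, e1 s2 hs2]
      exact mul_le_mul_of_nonneg_left key (by positivity)

-- product formula
lemma two_cosh_mul (u v : ℝ) :
    Real.cosh (u + v) + Real.cosh (u - v) = 2 * (Real.cosh u * Real.cosh v) := by
  rw [Real.cosh_add, Real.cosh_sub]; ring

section Hilbert
variable {H : Type*} [NormedAddCommGroup H] [InnerProductSpace ℝ H]

local notation "⟪" x ", " y "⟫" => @inner ℝ _ _ x y

lemma chord_real {a b c l : ℝ} (hl : 0 ≤ l) (ha : 0 < a) (hb : 0 < b)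
    (hc1 : -(a * b) ≤ c) (hc2 : c ≤ a * b) :
    Real.cosh (l * Real.sqrt (a ^ 2 + b ^ 2 + 2 * c)) ≤
      Real.cosh (l * a) * Real.cosh (l * b)
        + c * ((Real.cosh (l * (a + b)) - Real.cosh (l * (a - b))) / (2 * a * b)) := by
  have hab : (0:ℝ) < 2 * a * b := by positivity
  have hf := convexOn_cosh_sqrt hl
  set θ : ℝ := (a * b + c) / (2 * a * b) with hθ_def
  have hθ0 : 0 ≤ θ := div_nonneg (by linarith) hab.le
  have hθ1 : 0 ≤ 1 - θ := by
    rw [sub_nonneg, hθ_def, div_le_one hab]; linarith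
  have key := hf.2 (Set.mem_Ici.2 (sq_nonneg (a + b))) (Set.mem_Ici.2 (sq_nonneg (a - b)))
    hθ0 hθ1 (by ring)
  simp only [smul_eq_mul] at key
  have harg : θ * (a + b) ^ 2 + (1 - θ) * (a - b) ^ 2 = a ^ 2 + b ^ 2 + 2 * c := by
    rw [hθ_def]; field_simp; ring
  rw [harg] at key
  have e2 : Real.sqrt ((a + b) ^ 2) = a + b := Real.sqrt_sq (by linarith)
  have e3 : Real.cosh (l * Real.sqrt ((a - b) ^ 2)) = Real.cosh (l * (a - b)) := by
    rw [Real.sqrt_sq_eq_abs, ← Real.cosh_abs (l * (a - b)), abs_mul, abs_of_nonneg hl]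
  rw [e2, e3] at key
  refine key.trans (le_of_eq ?_)
  have hid : Real.cosh (l * (a + b)) + Real.cosh (l * (a - b))
      = 2 * (Real.cosh (l * a) * Real.cosh (l * b)) := by
    have := two_cosh_mul (l * a) (l * b)
    rw [show l * a + l * b = l * (a + b) by ring, show l * a - l * b = l * (a - b) by ring] at this
    exact this
  have h2 : Real.cosh (l * a) * Real.cosh (l * b)
      = (Real.cosh (l * (a + b)) + Real.cosh (l * (a - b))) / 2 := by linarith
  rw [h2, hθ_def]
  field_simp
  ring

/-- Pointwise chord bound: key step of Pinelis' argument. -/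
lemma cosh_norm_add_le (x y : H) {l b : ℝ} (hl : 0 ≤ l) (hb : 0 < b) (hy : ‖y‖ ≤ b) :
    Real.cosh (l * ‖x + y‖) ≤ Real.cosh (l * ‖x‖) * Real.cosh (l * b)
      + ⟪x, y⟫ * ((Real.cosh (l * (‖x‖ + b)) - Real.cosh (l * (‖x‖ - b))) / (2 * ‖x‖ * b)) := by
  rcases eq_or_lt_of_le (norm_nonneg x) with hx0 | ha
  · -- x = 0
    have hx : x = 0 := by rw [← norm_eq_zero]; exact hx0.symm
    subst hx
    simp only [inner_zero_left, zero_mul, add_zero, zero_add, norm_zero, mul_zero,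
      Real.cosh_zero, one_mul]
    rw [Real.cosh_le_cosh]
    rw [abs_of_nonneg (by positivity), abs_of_nonneg (by positivity)]
    exact mul_le_mul_of_nonneg_left hy hl
  · have hcab : |⟪x, y⟫| ≤ ‖x‖ * b :=
      (abs_real_inner_le_norm x y).trans (mul_le_mul_of_nonneg_left hy (norm_nonneg x))
    obtain ⟨hc1, hc2⟩ := abs_le.1 hcab
    have hs_nonneg : (0:ℝ) ≤ ‖x‖ ^ 2 + b ^ 2 + 2 * ⟪x, y⟫ := by
      nlinarith [sq_nonneg (‖x‖ - b)]
    -- step 1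
    have hstep1 : Real.cosh (l * ‖x + y‖) ≤
        Real.cosh (l * Real.sqrt (‖x‖ ^ 2 + b ^ 2 + 2 * ⟪x, y⟫)) := by
      rw [Real.cosh_le_cosh, abs_of_nonneg (by positivity), abs_of_nonneg (by positivity)]
      apply mul_le_mul_of_nonneg_left _ hl
      rw [← Real.sqrt_sq (norm_nonneg (x + y))]
      apply Real.sqrt_le_sqrt
      have hxy2 := norm_add_sq_real x y
      nlinarith [norm_nonneg y, sq_nonneg ‖y‖]
    -- step 2 : chord
    exact hstep1.trans (chord_real hl ha hb hc1 hc2)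

lemma integral_cosh_norm_add_le [MeasurableSpace H] [BorelSpace H] [SecondCountableTopology H]
    [CompleteSpace H] {ν : MeasureTheory.Measure H} [MeasureTheory.IsProbabilityMeasure ν]
    {l b : ℝ} (hl : 0 ≤ l) (hb : 0 < b)
    (hbd : ∀ᵐ y ∂ν, ‖y‖ ≤ b) (hmean : ∫ y, y ∂ν = 0) (x : H) :
    ∫ y, Real.cosh (l * ‖x + y‖) ∂ν ≤ Real.cosh (l * ‖x‖) * Real.cosh (l * b) := by
  have hint_id : MeasureTheory.Integrable (fun y : H => y) ν := by
    refine MeasureTheory.Integrable.mono' (MeasureTheory.integrable_const b)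
      aestronglyMeasurable_id ?_
    exact hbd
  have hint1 : MeasureTheory.Integrable (fun y => Real.cosh (l * ‖x + y‖)) ν := by
    refine MeasureTheory.Integrable.mono'
      (MeasureTheory.integrable_const (Real.cosh (l * (‖x‖ + b))))
      ((Real.continuous_cosh.comp
        (continuous_const.mul ((continuous_const.add continuous_id).norm))).aestronglyMeasurable) ?_
    filter_upwards [hbd] with y hy
    rw [Real.norm_eq_abs, abs_of_nonneg (Real.cosh_pos _).le, Real.cosh_le_cosh,
      abs_of_nonneg (by positivity), abs_of_nonneg (by positivity)]
    exact mul_le_mul_of_nonneg_left ((norm_add_le x y).trans (by linarith)) hl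
  have hint_inner : MeasureTheory.Integrable (fun y : H => (⟪x, y⟫ : ℝ)) ν := by
    have := (innerSL ℝ x).integrable_comp hint_id
    exact this
  set D : ℝ := (Real.cosh (l * (‖x‖ + b)) - Real.cosh (l * (‖x‖ - b))) / (2 * ‖x‖ * b) with hD
  have hint2 : MeasureTheory.Integrable
      (fun y : H => Real.cosh (l * ‖x‖) * Real.cosh (l * b) + ⟪x, y⟫ * D) ν :=
    (MeasureTheory.integrable_const _).add (hint_inner.mul_const D)
  calc ∫ y, Real.cosh (l * ‖x + y‖) ∂ν
      ≤ ∫ y, (Real.cosh (l * ‖x‖) * Real.cosh (l * b) + ⟪x, y⟫ * D) ∂ν := by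
        refine MeasureTheory.integral_mono_ae hint1 hint2 ?_
        filter_upwards [hbd] with y hy
        exact cosh_norm_add_le x y hl hb hy
    _ = Real.cosh (l * ‖x‖) * Real.cosh (l * b) := by
        rw [MeasureTheory.integral_add (MeasureTheory.integrable_const _) (hint_inner.mul_const D),
          MeasureTheory.integral_const, MeasureTheory.integral_mul_const]
        have : ∫ y, (⟪x, y⟫ : ℝ) ∂ν = ⟪x, ∫ y, y ∂ν⟫ := integral_inner hint_id x
        rw [this, hmean, inner_zero_right]
        simp

open MeasureTheory ProbabilityTheory in
lemma step_indep {Ω : Type*} [MeasurableSpace Ω] {P : MeasureTheory.Measure Ω}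
    [MeasureTheory.IsProbabilityMeasure P]
    [MeasurableSpace H] [BorelSpace H] [SecondCountableTopology H] [CompleteSpace H]
    {A B : Ω → H} (hA : Measurable A) (hB : Measurable B)
    (hAB : ProbabilityTheory.IndepFun A B P) {l b K : ℝ} (hl : 0 ≤ l) (hb : 0 < b)
    (hK : 0 ≤ K)
    (hAbd : ∀ᵐ ω ∂P, ‖A ω‖ ≤ K)
    (hBbd : ∀ᵐ ω ∂P, ‖B ω‖ ≤ b) (hBmean : ∫ ω, B ω ∂P = 0) :
    ∫ ω, Real.cosh (l * ‖A ω + B ω‖) ∂P ≤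
      (∫ ω, Real.cosh (l * ‖A ω‖) ∂P) * Real.cosh (l * b) := by
  set νA := P.map A with hνA
  set νB := P.map B with hνB
  haveI : IsProbabilityMeasure νA := Measure.isProbabilityMeasure_map hA.aemeasurable
  haveI : IsProbabilityMeasure νB := Measure.isProbabilityMeasure_map hB.aemeasurable
  have hmap : P.map (fun ω => (A ω, B ω)) = νA.prod νB :=
    (ProbabilityTheory.indepFun_iff_map_prod_eq_prod_map_map hA.aemeasurable
      hB.aemeasurable).1 hAB
  set F : H × H → ℝ := fun p => Real.cosh (l * ‖p.1 + p.2‖) with hF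
  have hFcont : Continuous F :=
    Real.continuous_cosh.comp (continuous_const.mul (continuous_fst.add continuous_snd).norm)
  -- a.e. bounds on the mapped measures
  have hmsK : MeasurableSet {a : H | ¬ ‖a‖ ≤ K} :=
    ((isClosed_le continuous_norm continuous_const).measurableSet).compl
  have hmsb : MeasurableSet {a : H | ¬ ‖a‖ ≤ b} :=
    ((isClosed_le continuous_norm continuous_const).measurableSet).compl
  have hbdA' : ∀ᵐ a ∂νA, ‖a‖ ≤ K := by
    rw [hνA, MeasureTheory.ae_map_iff hA.aemeasurable
      (isClosed_le continuous_norm continuous_const).measurableSet]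
    exact hAbd
  have hbdB' : ∀ᵐ y ∂νB, ‖y‖ ≤ b := by
    rw [hνB, MeasureTheory.ae_map_iff hB.aemeasurable
      (isClosed_le continuous_norm continuous_const).measurableSet]
    exact hBbd
  have hprod_ae : ∀ᵐ p ∂(νA.prod νB), ‖p.1‖ ≤ K ∧ ‖p.2‖ ≤ b := by
    rw [MeasureTheory.ae_iff]
    refine MeasureTheory.measure_mono_null
      (t := ({a : H | ¬ ‖a‖ ≤ K} ×ˢ Set.univ) ∪ (Set.univ ×ˢ {y : H | ¬ ‖y‖ ≤ b}))
      (fun p hp => ?_) (MeasureTheory.measure_union_null ?_ ?_)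
    · simp only [Set.mem_setOf_eq, not_and_or] at hp
      rcases hp with hp | hp
      · exact Or.inl ⟨hp, Set.mem_univ _⟩
      · exact Or.inr ⟨Set.mem_univ _, hp⟩
    · rw [MeasureTheory.Measure.prod_prod]
      rw [MeasureTheory.ae_iff] at hbdA'
      simpa [not_le] using hbdA' 
    · rw [MeasureTheory.Measure.prod_prod]
      rw [MeasureTheory.ae_iff] at hbdB'
      simpa [not_le] using hbdB' 
  have hFint : MeasureTheory.Integrable F (νA.prod νB) := by
    refine MeasureTheory.Integrable.mono'
      (MeasureTheory.integrable_const (Real.cosh (l * (K + b))))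
      hFcont.aestronglyMeasurable ?_
    filter_upwards [hprod_ae] with p hp
    rw [Real.norm_eq_abs, abs_of_nonneg (Real.cosh_pos _).le, Real.cosh_le_cosh,
      abs_of_nonneg (by positivity), abs_of_nonneg (by positivity)]
    exact mul_le_mul_of_nonneg_left ((norm_add_le _ _).trans (by linarith [hp.1, hp.2])) hl
  -- rewrite as an integral over the product measure
  have hpair : ∫ ω, Real.cosh (l * ‖A ω + B ω‖) ∂P = ∫ p, F p ∂(νA.prod νB) := by
    rw [← hmap, MeasureTheory.integral_map (hA.prodMk hB).aemeasurable
      hFcont.aestronglyMeasurable]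
  have hBmean' : ∫ y, y ∂νB = 0 := by
    have he : (∫ y, y ∂νB) = ∫ ω, B ω ∂P :=
      MeasureTheory.integral_map hB.aemeasurable aestronglyMeasurable_id
    rw [he]; exact hBmean
  have hfub : ∫ p, F p ∂(νA.prod νB) = ∫ a, ∫ y, F (a, y) ∂νB ∂νA :=
    MeasureTheory.integral_prod F hFint
  have hinner : ∀ a : H, ∫ y, F (a, y) ∂νB ≤ Real.cosh (l * ‖a‖) * Real.cosh (l * b) :=
    fun a => integral_cosh_norm_add_le hl hb hbdB' hBmean' a
  have h1 : MeasureTheory.Integrable (fun a => ∫ y, F (a, y) ∂νB) νA :=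
    hFint.integral_prod_left
  have h2 : MeasureTheory.Integrable (fun a : H => Real.cosh (l * ‖a‖) * Real.cosh (l * b)) νA := by
    refine MeasureTheory.Integrable.mono'
      (MeasureTheory.integrable_const (Real.cosh (l * K) * Real.cosh (l * b)))
      ((Real.continuous_cosh.comp (continuous_const.mul continuous_norm)).mul
        continuous_const).aestronglyMeasurable ?_
    filter_upwards [hbdA'] with a haK
    rw [Real.norm_eq_abs, abs_of_nonneg (by positivity)]
    refine mul_le_mul_of_nonneg_right ?_ (Real.cosh_pos _).le
    rw [Real.cosh_le_cosh, abs_of_nonneg (by positivity), abs_of_nonneg (by positivity)]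
    exact mul_le_mul_of_nonneg_left haK hl
  calc ∫ ω, Real.cosh (l * ‖A ω + B ω‖) ∂P
      = ∫ a, ∫ y, F (a, y) ∂νB ∂νA := by rw [hpair, hfub]
    _ ≤ ∫ a, Real.cosh (l * ‖a‖) * Real.cosh (l * b) ∂νA :=
        MeasureTheory.integral_mono_ae h1 h2 (Filter.Eventually.of_forall hinner)
    _ = (∫ a, Real.cosh (l * ‖a‖) ∂νA) * Real.cosh (l * b) := by
        rw [MeasureTheory.integral_mul_const]
    _ = (∫ ω, Real.cosh (l * ‖A ω‖) ∂P) * Real.cosh (l * b) := by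
        have he : (∫ a, Real.cosh (l * ‖a‖) ∂νA) = ∫ ω, Real.cosh (l * ‖A ω‖) ∂P :=
          MeasureTheory.integral_map hA.aemeasurable
            (Real.continuous_cosh.comp (continuous_const.mul continuous_norm)).aestronglyMeasurable
        rw [he]

open MeasureTheory ProbabilityTheory in
lemma iter_cosh {Ω : Type*} [MeasurableSpace Ω] {P : MeasureTheory.Measure Ω}
    [MeasureTheory.IsProbabilityMeasure P]
    [MeasurableSpace H] [BorelSpace H] [SecondCountableTopology H] [CompleteSpace H]
    {ι : Type*} {Y : ι → Ω → H} (hYmeas : ∀ i, Measurable (Y i))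
    (hYindep : ProbabilityTheory.iIndepFun Y P)
    {l b : ℝ} (hl : 0 ≤ l) (hb : 0 < b)
    (hYbd : ∀ i, ∀ᵐ ω ∂P, ‖Y i ω‖ ≤ b) (hYmean : ∀ i, ∫ ω, Y i ω ∂P = 0)
    (s : Finset ι) :
    ∫ ω, Real.cosh (l * ‖∑ i ∈ s, Y i ω‖) ∂P ≤ Real.cosh (l * b) ^ s.card := by
  classical
  induction' s using Finset.induction_on with i s hi ih
  · simp
  · have hA : Measurable (fun ω => ∑ j ∈ s, Y j ω) :=
      Finset.measurable_sum s (fun j _ => hYmeas j)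
    have hAbd : ∀ᵐ ω ∂P, ‖∑ j ∈ s, Y j ω‖ ≤ s.card * b := by
      have hall : ∀ᵐ ω ∂P, ∀ j ∈ s, ‖Y j ω‖ ≤ b :=
        (MeasureTheory.ae_ball_iff s.countable_toSet).2 (fun j _ => hYbd j)
      filter_upwards [hall] with ω hω
      calc ‖∑ j ∈ s, Y j ω‖ ≤ ∑ j ∈ s, ‖Y j ω‖ := norm_sum_le _ _
        _ ≤ ∑ _j ∈ s, b := Finset.sum_le_sum hω
        _ = s.card * b := by rw [Finset.sum_const, nsmul_eq_mul]
    have hindepAB : ProbabilityTheory.IndepFun (∑ j ∈ s, Y j) (Y i) P :=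
      hYindep.indepFun_finsetSum_of_notMem hYmeas hi
    have hindepAB' : ProbabilityTheory.IndepFun (fun ω => ∑ j ∈ s, Y j ω) (Y i) P := by
      have : (∑ j ∈ s, Y j) = fun ω => ∑ j ∈ s, Y j ω := by
        funext ω; exact Finset.sum_apply ω s Y
      rwa [this] at hindepAB
    have hstep := step_indep hA (hYmeas i) hindepAB' hl hb
      (by positivity) hAbd (hYbd i) (hYmean i)
    have hrw : ∀ ω, Real.cosh (l * ‖∑ j ∈ insert i s, Y j ω‖)
        = Real.cosh (l * ‖(∑ j ∈ s, Y j ω) + Y i ω‖) := by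
      intro ω
      rw [Finset.sum_insert hi, add_comm]
    calc ∫ ω, Real.cosh (l * ‖∑ j ∈ insert i s, Y j ω‖) ∂P
        = ∫ ω, Real.cosh (l * ‖(∑ j ∈ s, Y j ω) + Y i ω‖) ∂P := by
          simp_rw [hrw]
      _ ≤ (∫ ω, Real.cosh (l * ‖∑ j ∈ s, Y j ω‖) ∂P) * Real.cosh (l * b) := hstep
      _ ≤ Real.cosh (l * b) ^ s.card * Real.cosh (l * b) :=
          mul_le_mul_of_nonneg_right ih (Real.cosh_pos _).le
      _ = Real.cosh (l * b) ^ (insert i s).card := by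
          rw [Finset.card_insert_of_notMem hi, pow_succ]

end Hilbert

open MeasureTheory ProbabilityTheory


/-- **Concentration of the empirical kernel mean embedding (Bennett-type bound).**
Let `ξ₁, …, ξₙ` be i.i.d. random variables with values in a separable Hilbert space `H`,
bounded by `κ` almost surely.  Then for every `δ ∈ (0,1)`, with probability at least `1 - δ`,
`‖(1/n) ∑ᵢ ξᵢ - E[ξ₁]‖ ≤ 4 κ log(2/δ) / √n`.  In particular the empirical kernel mean
embedding of i.i.d. samples built from a bounded feature map satisfies this bound. -/
theorem kernel_mean_embedding_rate
    {Ω H : Type*} [MeasurableSpace Ω]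
    [NormedAddCommGroup H] [InnerProductSpace ℝ H] [CompleteSpace H]
    [SecondCountableTopology H] [MeasurableSpace H] [BorelSpace H]
    (P : Measure Ω) [IsProbabilityMeasure P]
    (n : ℕ) (hn : 0 < n)
    (ξ : Fin n → Ω → H)
    (hmeas : ∀ i, Measurable (ξ i))
    (hindep : iIndepFun ξ P)
    (hident : ∀ i, IdentDistrib (ξ i) (ξ ⟨0, hn⟩) P P)
    (κ : ℝ) (hκ : 0 < κ)
    (hbound : ∀ i, ∀ᵐ ω ∂P, ‖ξ i ω‖ ≤ κ)
    (δ : ℝ) (hδ : δ ∈ Set.Ioo (0 : ℝ) 1) :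
    ENNReal.ofReal (1 - δ) ≤
      P {ω | ‖(n : ℝ)⁻¹ • ∑ i, ξ i ω - ∫ ω', ξ ⟨0, hn⟩ ω' ∂P‖
              ≤ 4 * κ * Real.log (2 / δ) / Real.sqrt n} := by
  obtain ⟨hδ0, hδ1⟩ := hδ
  set m : H := ∫ ω', ξ ⟨0, hn⟩ ω' ∂P with hm_def
  set L : ℝ := Real.log (2 / δ) with hL_def
  have hnR : (0:ℝ) < n := Nat.cast_pos.2 hn
  have hsq : 0 < Real.sqrt n := Real.sqrt_pos.2 hnR
  have hsqsq : Real.sqrt n * Real.sqrt n = (n:ℝ) := Real.mul_self_sqrt hnR.le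
  have hLlog2 : Real.log 2 ≤ L := by
    rw [hL_def]
    apply Real.log_le_log (by norm_num)
    rw [le_div_iff₀ hδ0]; nlinarith
  have hhalf : (1:ℝ)/2 < Real.log 2 := by
    have := Real.log_two_gt_d9; linarith
  have hL : 0 < L := by linarith
  set l : ℝ := L / (κ * Real.sqrt n) with hl_def
  have hlpos : 0 < l := by rw [hl_def]; positivity
  set b : ℝ := 2 * κ with hb_def
  have hb : 0 < b := by rw [hb_def]; positivity
  set t : ℝ := 4 * κ * L / Real.sqrt n with ht_def
  have ht : 0 < t := by rw [ht_def]; positivity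
  -- integrability and mean
  have hξint : ∀ i, Integrable (ξ i) P := fun i =>
    Integrable.mono' (integrable_const κ) (hmeas i).aestronglyMeasurable (hbound i)
  have hmean_eq : ∀ i, ∫ ω, ξ i ω ∂P = m := fun i => (hident i).integral_eq
  have hmnorm : ‖m‖ ≤ κ := by
    rw [hm_def]
    calc ‖∫ ω', ξ ⟨0, hn⟩ ω' ∂P‖ ≤ ∫ ω', ‖ξ ⟨0,hn⟩ ω'‖ ∂P := norm_integral_le_integral_norm _
      _ ≤ ∫ _ω', κ ∂P := integral_mono_ae ((hξint _).norm) (integrable_const κ) (hbound _)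
      _ = κ := by simp
  set Y : Fin n → Ω → H := fun i ω => ξ i ω - m with hY_def
  have hYmeas : ∀ i, Measurable (Y i) := fun i => (hmeas i).sub measurable_const
  have hYindep : iIndepFun Y P :=
    hindep.comp (fun _ : Fin n => fun v : H => v - m)
      (fun _ => measurable_id.sub measurable_const)
  have hYbd : ∀ i, ∀ᵐ ω ∂P, ‖Y i ω‖ ≤ b := by
    intro i; filter_upwards [hbound i] with ω hω
    calc ‖ξ i ω - m‖ ≤ ‖ξ i ω‖ + ‖m‖ := norm_sub_le _ _
      _ ≤ κ + κ := add_le_add hω hmnorm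
      _ = b := by rw [hb_def]; ring
  have hYmean : ∀ i, ∫ ω, Y i ω ∂P = 0 := by
    intro i
    have : ∫ ω, Y i ω ∂P = (∫ ω, ξ i ω ∂P) - ∫ _ω, m ∂P :=
      integral_sub (hξint i) (integrable_const m)
    rw [this, hmean_eq i, integral_const]
    simp
  have hS : Measurable (fun ω => ∑ i, Y i ω) :=
    Finset.measurable_sum _ (fun i _ => hYmeas i)
  have hiter := iter_cosh hYmeas hYindep hlpos.le hb hYbd hYmean Finset.univ
  rw [Finset.card_univ, Fintype.card_fin] at hiter
  -- rewrite the good set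
  have hset : {ω | ‖(n : ℝ)⁻¹ • ∑ i, ξ i ω - m‖ ≤ t}
      = {ω | ‖∑ i, Y i ω‖ ≤ n * t} := by
    ext ω
    simp only [Set.mem_setOf_eq]
    have hsum : ∑ i, Y i ω = (∑ i, ξ i ω) - (n:ℝ) • m := by
      rw [hY_def]
      simp only
      rw [Finset.sum_sub_distrib, Finset.sum_const, Finset.card_univ, Fintype.card_fin]
      congr 1
      exact (Nat.cast_smul_eq_nsmul ℝ n m).symm
    have he : (n : ℝ)⁻¹ • ∑ i, ξ i ω - m = (n:ℝ)⁻¹ • ∑ i, Y i ω := by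
      rw [hsum, smul_sub, smul_smul, inv_mul_cancel₀ hnR.ne', one_smul]
    rw [he, norm_smul, norm_inv, Real.norm_natCast, inv_mul_le_iff₀ hnR]
  rw [hset]
  -- Markov inequality
  set f : Ω → ℝ := fun ω => Real.cosh (l * ‖∑ i, Y i ω‖) with hf_def
  have hfmeas : Measurable f :=
    Real.continuous_cosh.measurable.comp (measurable_const.mul hS.norm)
  have hSbd : ∀ᵐ ω ∂P, ‖∑ i, Y i ω‖ ≤ n * b := by
    have hall : ∀ᵐ ω ∂P, ∀ i, ‖Y i ω‖ ≤ b := MeasureTheory.ae_all_iff.2 hYbd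
    filter_upwards [hall] with ω hω
    calc ‖∑ i, Y i ω‖ ≤ ∑ i, ‖Y i ω‖ := norm_sum_le _ _
      _ ≤ ∑ _i : Fin n, b := Finset.sum_le_sum (fun i _ => hω i)
      _ = n * b := by
          rw [Finset.sum_const, Finset.card_univ, Fintype.card_fin, nsmul_eq_mul]
  have hfint : Integrable f P := by
    refine Integrable.mono' (integrable_const (Real.cosh (l * (n * b))))
      hfmeas.aestronglyMeasurable ?_
    filter_upwards [hSbd] with ω hω
    rw [hf_def]
    simp only
    rw [Real.norm_eq_abs, abs_of_nonneg (Real.cosh_pos _).le, Real.cosh_le_cosh,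
      abs_of_nonneg (by positivity), abs_of_nonneg (by positivity)]
    exact mul_le_mul_of_nonneg_left hω hlpos.le
  set ε : ℝ := Real.cosh (l * ((n : ℝ) * t)) with hε_def
  have hεpos : 0 < ε := Real.cosh_pos _
  have hmarkov := MeasureTheory.mul_meas_ge_le_integral_of_nonneg
    (Filter.Eventually.of_forall fun ω => (Real.cosh_pos (l * ‖∑ i, Y i ω‖)).le) hfint ε
  have hsub : {ω | ‖∑ i, Y i ω‖ ≤ (n : ℝ) * t}ᶜ ⊆ {ω | ε ≤ f ω} := by
    intro ω hω
    simp only [Set.mem_compl_iff, Set.mem_setOf_eq, not_le] at hω ⊢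
    rw [hε_def, hf_def]
    simp only
    rw [Real.cosh_le_cosh, abs_of_nonneg (by positivity), abs_of_nonneg (by positivity)]
    exact mul_le_mul_of_nonneg_left hω.le hlpos.le
  have hcompl_le : (P {ω | ‖∑ i, Y i ω‖ ≤ (n : ℝ) * t}ᶜ).toReal ≤ (∫ ω, f ω ∂P) / ε := by
    rw [le_div_iff₀ hεpos]
    calc (P {ω | ‖∑ i, Y i ω‖ ≤ (n : ℝ) * t}ᶜ).toReal * ε
        ≤ (P {ω | ε ≤ f ω}).toReal * ε := by
          refine mul_le_mul_of_nonneg_right ?_ hεpos.le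
          exact ENNReal.toReal_mono (measure_ne_top P _) (measure_mono hsub)
      _ = ε * (P {ω | ε ≤ f ω}).toReal := mul_comm _ _
      _ ≤ ∫ ω, f ω ∂P := hmarkov
  -- numeric bounds
  have hnum1 : l * b = 2 * L / Real.sqrt n := by
    rw [hl_def, hb_def]; field_simp
  have hcoshpow : Real.cosh (l * b) ^ n ≤ Real.exp (2 * L ^ 2) := by
    calc Real.cosh (l * b) ^ n ≤ Real.exp ((l * b) ^ 2 / 2) ^ n :=
          pow_le_pow_left₀ (Real.cosh_pos _).le (Real.cosh_le_exp_half_sq _) n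
      _ = Real.exp ((l * b) ^ 2 / 2 * n) := by rw [← Real.exp_nat_mul]; ring_nf
      _ = Real.exp (2 * L ^ 2) := by
          congr 1
          rw [hnum1, div_pow, Real.sq_sqrt hnR.le]
          field_simp
  have hnum2 : l * ((n : ℝ) * t) = 4 * L ^ 2 := by
    have hsq2 : Real.sqrt n ^ 2 = (n : ℝ) := Real.sq_sqrt hnR.le
    rw [hl_def, ht_def]
    field_simp
    linear_combination (-1 : ℝ) * hsq2
  have hεlb : Real.exp (4 * L ^ 2) / 2 ≤ ε := by
    rw [hε_def, hnum2, Real.cosh_eq]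
    have := Real.exp_pos (-(4 * L ^ 2))
    linarith
  have hintle : ∫ ω, f ω ∂P ≤ Real.exp (2 * L ^ 2) := hiter.trans hcoshpow
  have hfinal : (∫ ω, f ω ∂P) / ε ≤ δ := by
    have h1 : (∫ ω, f ω ∂P) / ε ≤ Real.exp (2 * L ^ 2) / (Real.exp (4 * L ^ 2) / 2) :=
      div_le_div₀ (Real.exp_pos _).le hintle (by positivity) hεlb
    have h2 : Real.exp (2 * L ^ 2) / (Real.exp (4 * L ^ 2) / 2)
        = 2 * Real.exp (2 * L ^ 2 - 4 * L ^ 2) := by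
      rw [Real.exp_sub]; field_simp
    have h3 : 2 * Real.exp (2 * L ^ 2 - 4 * L ^ 2) ≤ 2 * Real.exp (-L) := by
      have : 2 * L ^ 2 - 4 * L ^ 2 ≤ -L := by nlinarith
      have := Real.exp_le_exp.2 this
      linarith
    have h4 : Real.exp (-L) = δ / 2 := by
      rw [hL_def, ← Real.log_inv]
      rw [show (2 / δ)⁻¹ = δ / 2 by field_simp]
      exact Real.exp_log (by positivity)
    calc (∫ ω, f ω ∂P) / ε ≤ 2 * Real.exp (2 * L ^ 2 - 4 * L ^ 2) := h1.trans_eq h2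
      _ ≤ 2 * Real.exp (-L) := h3
      _ = δ := by rw [h4]; ring
  have hPc : P {ω | ‖∑ i, Y i ω‖ ≤ (n : ℝ) * t}ᶜ ≤ ENNReal.ofReal δ := by
    rw [← ENNReal.ofReal_toReal (measure_ne_top P _)]
    exact ENNReal.ofReal_le_ofReal (hcompl_le.trans hfinal)
  have hme : MeasurableSet {ω | ‖∑ i, Y i ω‖ ≤ (n : ℝ) * t} :=
    measurableSet_le hS.norm measurable_const
  have hsum1 : P {ω | ‖∑ i, Y i ω‖ ≤ (n : ℝ) * t}
      + P {ω | ‖∑ i, Y i ω‖ ≤ (n : ℝ) * t}ᶜ = 1 := by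
    rw [measure_add_measure_compl hme, measure_univ]
  have hkey : ENNReal.ofReal (1 - δ) + ENNReal.ofReal δ
      ≤ P {ω | ‖∑ i, Y i ω‖ ≤ (n : ℝ) * t} + ENNReal.ofReal δ := by
    rw [← ENNReal.ofReal_add (by linarith : (0:ℝ) ≤ 1 - δ) hδ0.le,
      show (1 : ℝ) - δ + δ = 1 by ring, ENNReal.ofReal_one, ← hsum1]
    exact add_le_add_right hPc _
  exact (ENNReal.add_le_add_iff_right ENNReal.ofReal_ne_top).1 hkey
end

section
/- Let Z be a measurable space, ρ_Z a σ-finite measure on Z, y : Z → 𝒴 measurable, φ : 𝒴 → H_Y a measurable feature map with sup ‖φ‖ ≤ κ, and w : Z → ℝ measurable with |w(z)| ≤ W for all z. Let P and P̃ be probability measures on Z, both absolutely continuous with respect to ρ_Z, with densities p and p̃. Then ‖∫ w(z) φ(y(z)) dP(z) − ∫ w(z) φ(y(z)) dP̃(z)‖_{H_Y} ≤ 2 W κ · H(P, P̃), where H(P, P̃) := (∫ (√p − √p̃)² dρ_Z)^{1/2} is the Hellinger distance. In particular, with w(z) = π(a|x)/π0(a|x) bounded by W = sup π / inf π0, the counterfactual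 policy mean embedding P ↦ χ(π)(P) is Lipschitz in Hellinger distance over the model with fixed propensity π0. -/
open MeasureTheory

/-- **Hellinger Lipschitzness of importance-weighted mean embeddings.**
Let `ρZ` be a σ-finite measure on `Z`, `y : Z → 𝒴` measurable, `φ : 𝒴 → H` a bounded
measurable feature map with `‖φ‖ ≤ κ`, and `w : Z → ℝ` measurable with `|w| ≤ W`.
If `P` and `P̃` are probability measures with densities `p`, `p̃` w.r.t. `ρZ`, then
`‖∫ w φ(y(·)) dP - ∫ w φ(y(·)) dP̃‖ ≤ 2 W κ H(P, P̃)` where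
`H(P,P̃) = (∫ (√p - √p̃)² dρZ)^{1/2}` is the Hellinger distance.  With
`w = π/π0` this says the counterfactual policy mean embedding is Lipschitz in Hellinger
distance over the model with fixed propensity `π0`. -/
theorem cpme_hellinger_lipschitz
    {Z 𝒴 H : Type*} [MeasurableSpace Z] [MeasurableSpace 𝒴]
    [NormedAddCommGroup H] [InnerProductSpace ℝ H] [CompleteSpace H]
    [SecondCountableTopology H]
    (ρZ : Measure Z) [SigmaFinite ρZ]
    (y : Z → 𝒴) (hy : Measurable y)
    (φ : 𝒴 → H) (hφmeas : StronglyMeasurable φ)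
    (κ : ℝ) (hφκ : ∀ v, ‖φ v‖ ≤ κ)
    (w : Z → ℝ) (hw : Measurable w)
    (W : ℝ) (hwW : ∀ z, |w z| ≤ W)
    (p ptilde : Z → ℝ) (hp : Measurable p) (hptilde : Measurable ptilde)
    (hp0 : ∀ z, 0 ≤ p z) (hptilde0 : ∀ z, 0 ≤ ptilde z)
    (P Ptilde : Measure Z) [IsProbabilityMeasure P] [IsProbabilityMeasure Ptilde]
    (hP : P = ρZ.withDensity fun z => ENNReal.ofReal (p z))
    (hPtilde : Ptilde = ρZ.withDensity fun z => ENNReal.ofReal (ptilde z)) :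
    ‖(∫ z, w z • φ (y z) ∂P) - ∫ z, w z • φ (y z) ∂Ptilde‖
      ≤ 2 * W * κ *
        Real.sqrt (∫ z, (Real.sqrt (p z) - Real.sqrt (ptilde z)) ^ 2 ∂ρZ) := by
  -- nonemptiness
  have hZ : Nonempty Z := by
    by_contra h
    have : P Set.univ = 1 := measure_univ
    rw [Set.univ_eq_empty_iff.2 (not_nonempty_iff.1 h), measure_empty] at this
    exact zero_ne_one this
  obtain ⟨z0⟩ := hZ
  have hW0 : 0 ≤ W := le_trans (abs_nonneg _) (hwW z0)
  have hκ0 : 0 ≤ κ := le_trans (norm_nonneg _) (hφκ (y z0))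
  -- lintegrals of densities equal 1
  have hlp : ∫⁻ z, ENNReal.ofReal (p z) ∂ρZ = 1 := by
    have := (measure_univ : P Set.univ = 1)
    rwa [hP, withDensity_apply _ MeasurableSet.univ, Measure.restrict_univ] at this
  have hlpt : ∫⁻ z, ENNReal.ofReal (ptilde z) ∂ρZ = 1 := by
    have := (measure_univ : Ptilde Set.univ = 1)
    rwa [hPtilde, withDensity_apply _ MeasurableSet.univ, Measure.restrict_univ] at this
  -- integrability of densities
  have hintp : Integrable p ρZ := by
    refine ⟨hp.aestronglyMeasurable, ?_⟩
    rw [HasFiniteIntegral]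
    have : ∀ z, ‖p z‖ₑ = ENNReal.ofReal (p z) :=
      fun z => Real.enorm_eq_ofReal (hp0 z)
    simp only [this, hlp]
    exact ENNReal.one_lt_top
  have hintpt : Integrable ptilde ρZ := by
    refine ⟨hptilde.aestronglyMeasurable, ?_⟩
    rw [HasFiniteIntegral]
    have : ∀ z, ‖ptilde z‖ₑ = ENNReal.ofReal (ptilde z) :=
      fun z => Real.enorm_eq_ofReal (hptilde0 z)
    simp only [this, hlpt]
    exact ENNReal.one_lt_top
  have hip1 : ∫ z, p z ∂ρZ = 1 := by
    rw [integral_eq_lintegral_of_nonneg_ae (Filter.Eventually.of_forall hp0)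
      hp.aestronglyMeasurable, hlp]
    simp
  have hipt1 : ∫ z, ptilde z ∂ρZ = 1 := by
    rw [integral_eq_lintegral_of_nonneg_ae (Filter.Eventually.of_forall hptilde0)
      hptilde.aestronglyMeasurable, hlpt]
    simp
  -- transfer the Bochner integrals
  set g : Z → H := fun z => w z • φ (y z) with hg
  have hgsm : StronglyMeasurable g := hw.stronglyMeasurable.smul (hφmeas.comp_measurable hy)
  have hgbd : ∀ z, ‖g z‖ ≤ W * κ := by
    intro z
    rw [hg, norm_smul, Real.norm_eq_abs]
    exact mul_le_mul (hwW z) (hφκ _) (norm_nonneg _) hW0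
  have hTP : (∫ z, g z ∂P) = ∫ z, p z • g z ∂ρZ := by
    rw [hP]
    rw [show (fun z => ENNReal.ofReal (p z)) = fun z => ((p z).toNNReal : ENNReal) from rfl]
    rw [integral_withDensity_eq_integral_smul hp.real_toNNReal]
    congr 1
    ext z
    rw [NNReal.smul_def, Real.coe_toNNReal _ (hp0 z)]
  have hTPt : (∫ z, g z ∂Ptilde) = ∫ z, ptilde z • g z ∂ρZ := by
    rw [hPtilde]
    rw [show (fun z => ENNReal.ofReal (ptilde z)) = fun z => ((ptilde z).toNNReal : ENNReal)
      from rfl]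
    rw [integral_withDensity_eq_integral_smul hptilde.real_toNNReal]
    congr 1
    ext z
    rw [NNReal.smul_def, Real.coe_toNNReal _ (hptilde0 z)]
  -- integrability of p • g, ptilde • g
  have hintpg : Integrable (fun z => p z • g z) ρZ := by
    refine Integrable.mono' (hintp.const_mul (W * κ)) ((hp.stronglyMeasurable.smul hgsm).aestronglyMeasurable) ?_
    refine Filter.Eventually.of_forall fun z => ?_
    rw [norm_smul, Real.norm_of_nonneg (hp0 z), mul_comm (W * κ)]
    exact mul_le_mul_of_nonneg_left (hgbd z) (hp0 z)
  have hintptg : Integrable (fun z => ptilde z • g z) ρZ := by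
    refine Integrable.mono' (hintpt.const_mul (W * κ)) ((hptilde.stronglyMeasurable.smul hgsm).aestronglyMeasurable) ?_
    refine Filter.Eventually.of_forall fun z => ?_
    rw [norm_smul, Real.norm_of_nonneg (hptilde0 z), mul_comm (W * κ)]
    exact mul_le_mul_of_nonneg_left (hgbd z) (hptilde0 z)
  have hdiff : (∫ z, g z ∂P) - (∫ z, g z ∂Ptilde) = ∫ z, (p z - ptilde z) • g z ∂ρZ := by
    rw [hTP, hTPt, ← integral_sub hintpg hintptg]
    congr 1; ext z; rw [sub_smul]
  -- first bound: ‖diff‖ ≤ Wκ ∫ |p - ptilde|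
  have hnorm : ‖(∫ z, g z ∂P) - ∫ z, g z ∂Ptilde‖ ≤ (W * κ) * ∫ z, |p z - ptilde z| ∂ρZ := by
    rw [hdiff]
    calc ‖∫ z, (p z - ptilde z) • g z ∂ρZ‖
        ≤ ∫ z, ‖(p z - ptilde z) • g z‖ ∂ρZ := norm_integral_le_integral_norm _
      _ ≤ ∫ z, |p z - ptilde z| * (W * κ) ∂ρZ := by
          refine integral_mono_of_nonneg (Filter.Eventually.of_forall fun z => norm_nonneg _)
            (((hintp.sub hintpt).abs).mul_const (W * κ))
            (Filter.Eventually.of_forall fun z => ?_)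
          show ‖(p z - ptilde z) • g z‖ ≤ |p z - ptilde z| * (W * κ)
          rw [norm_smul, Real.norm_eq_abs]
          exact mul_le_mul_of_nonneg_left (hgbd z) (abs_nonneg _)
      _ = (W * κ) * ∫ z, |p z - ptilde z| ∂ρZ := by
          rw [← integral_const_mul]
          congr 1; ext z; ring
  -- abbreviations
  set f1 : Z → ℝ := fun z => |Real.sqrt (p z) - Real.sqrt (ptilde z)| with hf1
  set f2 : Z → ℝ := fun z => Real.sqrt (p z) + Real.sqrt (ptilde z) with hf2
  have hf1m : Measurable f1 := (hp.sqrt.sub hptilde.sqrt).abs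
  have hf2m : Measurable f2 := hp.sqrt.add hptilde.sqrt
  have hfeq : ∀ z, |p z - ptilde z| = f1 z * f2 z := by
    intro z
    show |p z - ptilde z|
        = |Real.sqrt (p z) - Real.sqrt (ptilde z)| * (Real.sqrt (p z) + Real.sqrt (ptilde z))
    have h1 : p z - ptilde z = (Real.sqrt (p z) - Real.sqrt (ptilde z))
        * (Real.sqrt (p z) + Real.sqrt (ptilde z)) := by
      nlinarith [Real.sq_sqrt (hp0 z), Real.sq_sqrt (hptilde0 z)]
    rw [h1, abs_mul]
    congr 1
    exact abs_of_nonneg (add_nonneg (Real.sqrt_nonneg _) (Real.sqrt_nonneg _))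
  -- integrability of the squares
  have hsq1 : ∀ z, f1 z ^ 2 ≤ p z + ptilde z := by
    intro z
    show |Real.sqrt (p z) - Real.sqrt (ptilde z)| ^ 2 ≤ p z + ptilde z
    rw [sq_abs]
    nlinarith [Real.sq_sqrt (hp0 z), Real.sq_sqrt (hptilde0 z),
      mul_nonneg (Real.sqrt_nonneg (p z)) (Real.sqrt_nonneg (ptilde z))]
  have hsq2 : ∀ z, f2 z ^ 2 ≤ 2 * (p z + ptilde z) := by
    intro z
    show (Real.sqrt (p z) + Real.sqrt (ptilde z)) ^ 2 ≤ 2 * (p z + ptilde z)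
    nlinarith [Real.sq_sqrt (hp0 z), Real.sq_sqrt (hptilde0 z),
      sq_nonneg (Real.sqrt (p z) - Real.sqrt (ptilde z))]
  have hintsq1 : Integrable (fun z => f1 z ^ 2) ρZ := by
    refine Integrable.mono' (hintp.add hintpt) ((hf1m.pow_const 2).aestronglyMeasurable) ?_
    exact Filter.Eventually.of_forall fun z => by
      rw [Real.norm_of_nonneg (sq_nonneg _)]; exact hsq1 z
  have hintsq2 : Integrable (fun z => f2 z ^ 2) ρZ := by
    refine Integrable.mono' ((hintp.add hintpt).const_mul 2)
      ((hf2m.pow_const 2).aestronglyMeasurable) ?_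
    exact Filter.Eventually.of_forall fun z => by
      rw [Real.norm_of_nonneg (sq_nonneg _)]; exact hsq2 z
  have hmem1 : MemLp f1 (ENNReal.ofReal 2) ρZ := by
    rw [show ENNReal.ofReal 2 = (2 : ENNReal) by norm_num]
    exact (memLp_two_iff_integrable_sq hf1m.aestronglyMeasurable).2 hintsq1
  have hmem2 : MemLp f2 (ENNReal.ofReal 2) ρZ := by
    rw [show ENNReal.ofReal 2 = (2 : ENNReal) by norm_num]
    exact (memLp_two_iff_integrable_sq hf2m.aestronglyMeasurable).2 hintsq2
  -- Cauchy-Schwarz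
  have hCS : ∫ z, f1 z * f2 z ∂ρZ ≤
      (∫ z, f1 z ^ (2 : ℝ) ∂ρZ) ^ (1 / (2 : ℝ)) * (∫ z, f2 z ^ (2 : ℝ) ∂ρZ) ^ (1 / (2 : ℝ)) :=
    integral_mul_le_Lp_mul_Lq_of_nonneg (by constructor <;> norm_num)
      (Filter.Eventually.of_forall fun z => abs_nonneg _)
      (Filter.Eventually.of_forall fun z =>
        add_nonneg (Real.sqrt_nonneg _) (Real.sqrt_nonneg _)) hmem1 hmem2
  -- convert rpow to pow
  have hrp1 : (fun z => f1 z ^ (2 : ℝ)) = fun z => f1 z ^ 2 := by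
    ext z; rw [show (2 : ℝ) = ((2 : ℕ) : ℝ) by norm_num, Real.rpow_natCast]
  have hrp2 : (fun z => f2 z ^ (2 : ℝ)) = fun z => f2 z ^ 2 := by
    ext z; rw [show (2 : ℝ) = ((2 : ℕ) : ℝ) by norm_num, Real.rpow_natCast]
  rw [hrp1, hrp2] at hCS
  -- bound the second factor by 2
  have hI2nonneg : 0 ≤ ∫ z, f2 z ^ 2 ∂ρZ :=
    integral_nonneg fun z => sq_nonneg _
  have hI2le : ∫ z, f2 z ^ 2 ∂ρZ ≤ 4 := by
    calc ∫ z, f2 z ^ 2 ∂ρZ ≤ ∫ z, 2 * (p z + ptilde z) ∂ρZ :=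
          integral_mono hintsq2 ((hintp.add hintpt).const_mul 2) hsq2
      _ = 4 := by rw [integral_const_mul, integral_add hintp hintpt, hip1, hipt1]; norm_num
  have hfac2 : (∫ z, f2 z ^ 2 ∂ρZ) ^ (1 / (2 : ℝ)) ≤ 2 := by
    rw [← Real.sqrt_eq_rpow]
    calc Real.sqrt (∫ z, f2 z ^ 2 ∂ρZ) ≤ Real.sqrt 4 := Real.sqrt_le_sqrt hI2le
      _ = 2 := by
          rw [show (4 : ℝ) = 2 ^ 2 by norm_num, Real.sqrt_sq (by norm_num : (0:ℝ) ≤ 2)]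
  -- first factor equals the Hellinger integrand
  have hfac1 : (∫ z, f1 z ^ 2 ∂ρZ) ^ (1 / (2 : ℝ))
      = Real.sqrt (∫ z, (Real.sqrt (p z) - Real.sqrt (ptilde z)) ^ 2 ∂ρZ) := by
    rw [← Real.sqrt_eq_rpow]
    congr 1
    refine integral_congr_ae (Filter.Eventually.of_forall fun z => ?_)
    show |Real.sqrt (p z) - Real.sqrt (ptilde z)| ^ 2 = (Real.sqrt (p z) - Real.sqrt (ptilde z)) ^ 2
    rw [sq_abs]
  -- put everything together
  have habs : ∫ z, |p z - ptilde z| ∂ρZ ≤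
      2 * Real.sqrt (∫ z, (Real.sqrt (p z) - Real.sqrt (ptilde z)) ^ 2 ∂ρZ) := by
    have h1 : ∫ z, |p z - ptilde z| ∂ρZ = ∫ z, f1 z * f2 z ∂ρZ :=
      integral_congr_ae (Filter.Eventually.of_forall hfeq)
    rw [h1]
    refine le_trans hCS ?_
    rw [hfac1, mul_comm]
    exact mul_le_mul_of_nonneg_right hfac2 (Real.sqrt_nonneg _)
  calc ‖(∫ z, w z • φ (y z) ∂P) - ∫ z, w z • φ (y z) ∂Ptilde‖
      ≤ (W * κ) * ∫ z, |p z - ptilde z| ∂ρZ := hnorm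
    _ ≤ (W * κ) * (2 * Real.sqrt (∫ z, (Real.sqrt (p z) - Real.sqrt (ptilde z)) ^ 2 ∂ρZ)) :=
        mul_le_mul_of_nonneg_left habs (mul_nonneg hW0 hκ0)
    _ = 2 * W * κ * Real.sqrt (∫ z, (Real.sqrt (p z) - Real.sqrt (ptilde z)) ^ 2 ∂ρZ) := by ring
end
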